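/- Let n ≥ 2. There is no nonempty bounded open convex set Ω ⊆ ℝⁿ and function u ∈ C⁴(Ω), locally uniformly convex, satisfying the affine maximal surface equation L[u] = 0 in Ω, such that w(x) = (det D²u(x))^{-(n+1)/(n+2)} extends to a continuous function on Ω̄ that vanishes identically on ∂Ω. -/

import Mathlib

open MeasureTheory

noncomputable section

/-- `ℝⁿ` with the Euclidean structure. -/
abbrev E (n : ℕ) := EuclideanSpace ℝ (Fin n)

/-- The Hessian matrix `D²u(x)` of second partial derivatives. -/
noncomputable def Hess {n : ℕ} (u : E n → ℝ) (x : E n) : Matrix (Fin n) (Fin n) ℝ :=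
  fun i j => iteratedFDeriv ℝ 2 u x ![EuclideanSpace.single i 1, EuclideanSpace.single j 1]

/-- `w(x) = (det D²u(x))^(-(n+1)/(n+2))`. -/
noncomputable def wFn (n : ℕ) (u : E n → ℝ) (x : E n) : ℝ :=
  (Hess u x).det ^ (-(n + 1 : ℝ) / (n + 2))

/-- The affine maximal surface operator `L[u](x) = ∑ᵢⱼ Uⁱʲ(x) ∂²w/∂xᵢ∂xⱼ(x)`,
where `[Uⁱʲ]` is the cofactor (= adjugate, by symmetry of the Hessian) matrix of `D²u`. -/
noncomputable def Lop (n : ℕ) (u : E n → ℝ) (x : E n) : ℝ :=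
  ∑ i, ∑ j, (Hess u x).adjugate i j *
    iteratedFDeriv ℝ 2 (wFn n u) x ![EuclideanSpace.single i 1, EuclideanSpace.single j 1]

/-! ### Auxiliary lemmas -/

section Aux

open Filter Set Finset Matrix

/-- Second-derivative test: at an interior local maximum of a `C²` function, the second
derivative is negative semidefinite. -/
lemma sndDerivTest {F : Type*} [NormedAddCommGroup F] [NormedSpace ℝ F]
    {f : F → ℝ} {y : F} (hf : ContDiffAt ℝ 2 f y) (hmax : IsLocalMax f y) (h : F) :
    fderiv ℝ (fderiv ℝ f) y h h ≤ 0 := by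
  by_contra hc
  push_neg at hc
  set c : ℝ := fderiv ℝ (fderiv ℝ f) y h h with hcdef
  obtain ⟨U₀, hU₀nhds, hU₀f⟩ := hf.contDiffOn le_rfl (by simp)
  set U : Set F := interior U₀ with hUdef
  have hUopen : IsOpen U := isOpen_interior
  have hyU : y ∈ U := mem_interior_iff_mem_nhds.2 hU₀nhds
  have hUf : ContDiffOn ℝ 2 f U := hU₀f.mono interior_subset
  have hdiff : ∀ z ∈ U, DifferentiableAt ℝ f z := fun z hz =>
    ((hUf.contDiffAt (hUopen.mem_nhds hz)).differentiableAt (by norm_num))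
  set g : ℝ → F := fun t => y + t • h with hgdef
  have hg0 : g 0 = y := by simp [hgdef]
  have hgd : ∀ t : ℝ, HasDerivAt g h t := by
    intro t
    simpa [hgdef] using ((hasDerivAt_id t).smul_const h).const_add y
  have hgc : Continuous g := by fun_prop
  set ψ : ℝ → ℝ := fun t => fderiv ℝ f (g t) h with hψdef
  have hφd : ∀ t : ℝ, g t ∈ U → HasDerivAt (f ∘ g) (ψ t) t := by
    intro t ht
    exact ((hdiff _ ht).hasFDerivAt).comp_hasDerivAt t (hgd t)
  have hgt : Tendsto g (nhds 0) (nhds y) := by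
    rw [← hg0]; exact hgc.tendsto 0
  have hφmax : IsLocalMax (f ∘ g) 0 := by
    have := hgt.eventually hmax
    simpa [IsLocalMax, IsMaxFilter, hg0] using this
  have hψ0 : ψ 0 = 0 := by
    have h1 := (hφd 0 (hg0 ▸ hyU)).deriv
    rw [← h1]; exact hφmax.deriv_eq_zero
  have hfd1 : DifferentiableAt ℝ (fderiv ℝ f) y :=
    (hf.fderiv_right (m := 1) (by norm_num)).differentiableAt one_ne_zero
  have hψd : HasDerivAt ψ c 0 := by
    have h2 : HasDerivAt (fun t => fderiv ℝ f (g t)) (fderiv ℝ (fderiv ℝ f) y h) 0 := by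
      have h1 : HasFDerivAt (fderiv ℝ f) (fderiv ℝ (fderiv ℝ f) y) (g 0) := hg0 ▸ hfd1.hasFDerivAt
      exact h1.comp_hasDerivAt 0 (hgd 0)
    have h3 := h2.clm_apply (hasDerivAt_const (0:ℝ) h)
    simpa [hg0] using h3
  have hslope : Tendsto (slope ψ 0) (nhdsWithin 0 {(0:ℝ)}ᶜ) (nhds c) :=
    hasDerivAt_iff_tendsto_slope.1 hψd
  have hev : ∀ᶠ t in nhdsWithin (0:ℝ) (Ioi 0), 0 < ψ t := by
    have h4 : ∀ᶠ t in nhdsWithin (0:ℝ) {(0:ℝ)}ᶜ, 0 < slope ψ 0 t :=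
      hslope.eventually (lt_mem_nhds hc)
    have h5 : ∀ᶠ t in nhdsWithin (0:ℝ) (Ioi 0), 0 < slope ψ 0 t :=
      h4.filter_mono (nhdsWithin_mono 0 (fun t ht => ne_of_gt ht))
    have h6 : ∀ᶠ t in nhdsWithin (0:ℝ) (Ioi 0), 0 < t :=
      eventually_mem_nhdsWithin
    filter_upwards [h5, h6] with t h5t h6t
    have : slope ψ 0 t = ψ t / t := by simp [slope_def_field, hψ0]
    rw [this] at h5t
    have := mul_pos h5t h6t
    rwa [div_mul_cancel₀] at this
    exact ne_of_gt h6t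
  have hevU : ∀ᶠ t in nhds (0:ℝ), g t ∈ U := hgt.eventually (hUopen.mem_nhds hyU)
  have hevM : ∀ᶠ t in nhds (0:ℝ), f (g t) ≤ f y := by
    have := hgt.eventually hmax; exact this
  have hall : ∀ᶠ t in nhdsWithin (0:ℝ) (Ioi 0), 0 < ψ t ∧ g t ∈ U ∧ f (g t) ≤ f y := by
    filter_upwards [hev, (hevU.and hevM).filter_mono nhdsWithin_le_nhds] with t h1 h2
    exact ⟨h1, h2.1, h2.2⟩
  obtain ⟨b, hb, hsub⟩ := mem_nhdsGT_iff_exists_Ioc_subset.1 hall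
  have hmem : ∀ t ∈ Icc (0:ℝ) b, g t ∈ U := by
    intro t ht
    rcases eq_or_lt_of_le ht.1 with rfl | hlt
    · rwa [hg0]
    · exact (hsub ⟨hlt, ht.2⟩).2.1
  have hcont : ContinuousOn (f ∘ g) (Icc 0 b) := by
    intro t ht
    exact ((hφd t (hmem t ht)).continuousAt).continuousWithinAt
  have hmono : StrictMonoOn (f ∘ g) (Icc 0 b) := by
    apply strictMonoOn_of_deriv_pos (convex_Icc 0 b) hcont
    intro t ht
    rw [interior_Icc] at ht
    rw [(hφd t (hmem t ⟨le_of_lt ht.1, le_of_lt ht.2⟩)).deriv]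
    exact (hsub ⟨ht.1, le_of_lt ht.2⟩).1
  have hlt : (f ∘ g) 0 < (f ∘ g) b :=
    hmono ⟨le_rfl, le_of_lt hb⟩ ⟨le_of_lt hb, le_rfl⟩ hb
  have hle : f (g b) ≤ f y := (hsub ⟨hb, le_rfl⟩).2.2
  rw [Function.comp, Function.comp, hg0] at hlt
  exact absurd (lt_of_lt_of_le hlt hle) (lt_irrefl _)

lemma pairing_nonpos {n : ℕ} {A : Matrix (Fin n) (Fin n) ℝ} (hA : A.PosSemidef)
    (P : Matrix (Fin n) (Fin n) ℝ) (hP : ∀ c : Fin n → ℝ, ∑ i, ∑ j, c i * c j * P i j ≤ 0) :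
    ∑ i, ∑ j, A i j * P i j ≤ 0 := by
  obtain ⟨B, rfl⟩ : ∃ B : Matrix (Fin n) (Fin n) ℝ, A = Bᴴ * B := by
    open scoped MatrixOrder in
    obtain ⟨X, hX, -, rfl⟩ := CFC.exists_sqrt_of_isSelfAdjoint_of_quasispectrumRestricts
      hA.isHermitian (QuasispectrumRestricts.nnreal_of_nonneg hA.nonneg)
    exact ⟨X, congrArg (· * X) hX.star_eq.symm⟩
  have key : ∑ i, ∑ j, (Bᴴ * B) i j * P i j = ∑ k, ∑ i, ∑ j, B k i * B k j * P i j := by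
    simp only [Matrix.mul_apply, Matrix.conjTranspose_apply, star_trivial, Finset.sum_mul]
    have h1 : ∀ i : Fin n, ∑ j : Fin n, ∑ k : Fin n, B k i * B k j * P i j
        = ∑ k : Fin n, ∑ j : Fin n, B k i * B k j * P i j := fun i => Finset.sum_comm
    simp_rw [h1]
    exact Finset.sum_comm
  rw [key]
  exact Finset.sum_nonpos fun k _ => hP (fun i => B k i)

lemma posdef_smul {n : ℕ} {A : Matrix (Fin n) (Fin n) ℝ} (hA : A.PosDef) {c : ℝ} (hc : 0 < c) :
    (c • A).PosDef := by
  constructor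
  · show (c • A).conjTranspose = c • A
    rw [Matrix.conjTranspose_smul, star_trivial]
    congr 1
    exact hA.1
  · intro x hx
    have := hA.2 hx
    simpa [Finsupp.mul_sum, mul_assoc, mul_left_comm] using smul_pos hc this

lemma adjugate_posdef {n : ℕ} {A : Matrix (Fin n) (Fin n) ℝ} (hA : A.PosDef) :
    A.adjugate.PosDef := by
  have hdet : 0 < A.det := hA.det_pos
  have hinv : A⁻¹.PosDef := hA.inv
  have : A.adjugate = A.det • A⁻¹ := by
    rw [Matrix.inv_def, smul_smul, Ring.inverse_eq_inv, mul_inv_cancel₀ hdet.ne', one_smul]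
  rw [this]
  exact posdef_smul hinv hdet

lemma posdef_diag_pos {n : ℕ} {A : Matrix (Fin n) (Fin n) ℝ} (hA : A.PosDef) (i : Fin n) :
    0 < A i i := by
  exact hA.diag_pos

lemma contDiffAt_finset_prod {E : Type*} [NormedAddCommGroup E] [NormedSpace ℝ E]
    {ι : Type*} [DecidableEq ι] {m : WithTop ℕ∞} (s : Finset ι) (f : ι → E → ℝ) {x : E}
    (h : ∀ i ∈ s, ContDiffAt ℝ m (f i) x) :
    ContDiffAt ℝ m (fun x => ∏ i ∈ s, f i x) x := by
  induction s using Finset.cons_induction with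
  | empty => simpa using contDiffAt_const
  | cons a s ha ih =>
    simp only [Finset.prod_cons]
    exact (h a (Finset.mem_cons_self a s)).mul (ih fun i hi => h i (Finset.mem_cons_of_mem hi))

lemma contDiffAt_hess_entry {n : ℕ} {u : E n → ℝ} {x : E n}
    (hu : ContDiffAt ℝ 4 u x) (i j : Fin n) :
    ContDiffAt ℝ 2 (fun z => Hess u z i j) x := by
  have h1 : ContDiffAt ℝ 2 (iteratedFDeriv ℝ 2 u) x :=
    hu.iteratedFDeriv_right (by norm_num)
  exact (ContinuousMultilinearMap.apply ℝ (fun _ : Fin 2 => E n) ℝ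
    ![EuclideanSpace.single i 1, EuclideanSpace.single j 1]).contDiff.contDiffAt.comp x h1

lemma contDiffAt_det_hess {n : ℕ} {u : E n → ℝ} {x : E n} (hu : ContDiffAt ℝ 4 u x) :
    ContDiffAt ℝ 2 (fun z => (Hess u z).det) x := by
  simp_rw [Matrix.det_apply']
  apply ContDiffAt.sum
  intro σ _
  exact (contDiffAt_const (c := ((Equiv.Perm.sign σ : ℤ) : ℝ))).mul
    (contDiffAt_finset_prod _ _ fun i _ => contDiffAt_hess_entry hu (σ i) i)

section q
variable {n : ℕ} [NeZero n]

/-- Projection to the first coordinate. -/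
noncomputable def qpi (n : ℕ) [NeZero n] : E n →L[ℝ] ℝ := EuclideanSpace.proj (0 : Fin n)

/-- The auxiliary perturbation `q(x) = x₀²`. -/
noncomputable def qFn (n : ℕ) [NeZero n] : E n → ℝ := fun x => (qpi n x) ^ 2

/-- The (constant) second derivative of `qFn`. -/
noncomputable def qL (n : ℕ) [NeZero n] : E n →L[ℝ] (E n →L[ℝ] ℝ) :=
  ((2 : ℝ) • qpi n).smulRight (qpi n)

lemma qFn_contDiff {m : WithTop ℕ∞} : ContDiff ℝ m (qFn n) := ((qpi n).contDiff).pow 2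

lemma qFn_hasFDerivAt (x : E n) : HasFDerivAt (qFn n) (qL n x) x := by
  have h := ((qpi n).hasFDerivAt (x := x)).mul ((qpi n).hasFDerivAt (x := x))
  have he : qpi n x • qpi n + qpi n x • qpi n = qL n x := by
    ext z
    simp [qL, two_smul, ContinuousLinearMap.smulRight_apply, mul_comm]
    ring
  have h2 : HasFDerivAt (fun y => qpi n y * qpi n y) (qL n x) x := he ▸ h
  have hq : qFn n = fun y => qpi n y * qpi n y := by
    funext y; simp [qFn, sq]
  rw [hq]
  exact h2

lemma qFn_fderiv : fderiv ℝ (qFn n) = fun x => qL n x := by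
  funext x
  exact (qFn_hasFDerivAt x).fderiv

lemma qFn_snd_fderiv (x : E n) : fderiv ℝ (fderiv ℝ (qFn n)) x = qL n := by
  rw [qFn_fderiv]
  exact (qL n).fderiv

lemma qL_apply (h k : E n) : qL n h k = 2 * h 0 * k 0 := by
  simp [qL, ContinuousLinearMap.smulRight_apply, qpi]

lemma qFn_nonneg (x : E n) : 0 ≤ qFn n x := sq_nonneg _

end q

end Aux

/-- **Necessary condition for the affine Plateau problem** (Section 5): there is no affine
maximal, locally uniformly convex function on a nonempty bounded open convex domain for which
`w = (det D²u)^{-(n+1)/(n+2)}` extends continuously to `Ω̄` with zero boundary values. -/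
theorem no_affine_maximal_with_w_vanishing_on_boundary (n : ℕ) (hn : 2 ≤ n) :
    ¬ ∃ (Ω : Set (E n)) (u W : E n → ℝ),
      Ω.Nonempty ∧ IsOpen Ω ∧ Convex ℝ Ω ∧ Bornology.IsBounded Ω ∧
      ContDiffOn ℝ 4 u Ω ∧
      (∀ x ∈ Ω, (Hess u x).PosDef) ∧
      (∀ x ∈ Ω, Lop n u x = 0) ∧
      ContinuousOn W (closure Ω) ∧
      (∀ x ∈ Ω, W x = wFn n u x) ∧
      (∀ x ∈ frontier Ω, W x = 0) := by
  have : NeZero n := ⟨by omega⟩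
  rintro ⟨Ω, u, W, ⟨x₀, hx₀⟩, hΩopen, -, hΩbd, hu, hpos, hLop, hWcont, hWeq, hW0⟩
  classical
  set w : E n → ℝ := wFn n u with hwdef
  -- regularity and positivity of w on Ω
  have hwC2 : ∀ x ∈ Ω, ContDiffAt ℝ 2 w x := by
    intro x hx
    have hu4 : ContDiffAt ℝ 4 u x := hu.contDiffAt (hΩopen.mem_nhds hx)
    have hdet : ContDiffAt ℝ 2 (fun z => (Hess u z).det) x := contDiffAt_det_hess hu4
    have hdetpos : 0 < (Hess u x).det := (hpos x hx).det_pos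
    have hr : ContDiffAt ℝ 2 (fun t : ℝ => t ^ (-(n + 1 : ℝ) / (n + 2))) ((Hess u x).det) :=
      Real.contDiffAt_rpow_const_of_ne hdetpos.ne'
    exact hr.comp x hdet
  have hwpos : ∀ x ∈ Ω, 0 < w x := by
    intro x hx
    exact Real.rpow_pos_of_pos (hpos x hx).det_pos _
  -- compactness
  have hK : IsCompact (closure Ω) := hΩbd.isCompact_closure
  have hKne : (closure Ω).Nonempty := ⟨x₀, subset_closure hx₀⟩
  -- bound for qFn on closure Ω
  obtain ⟨z₀, hz₀K, hz₀max⟩ := hK.exists_isMaxOn hKne ((qFn_contDiff (m := 2)).continuous.continuousOn)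
  set Q : ℝ := qFn n z₀ with hQdef
  have hQ0 : 0 ≤ Q := le_trans (qFn_nonneg x₀) (hz₀max (subset_closure hx₀))
  -- choice of ε
  set ε : ℝ := w x₀ / (2 * (Q + 1)) with hεdef
  have hε : 0 < ε := div_pos (hwpos x₀ hx₀) (by linarith)
  -- maximize V = W + ε • qFn over the closure
  set V : E n → ℝ := fun x => W x + ε * qFn n x with hVdef
  have hVcont : ContinuousOn V (closure Ω) :=
    hWcont.add ((continuous_const.mul (qFn_contDiff (m := 2)).continuous).continuousOn)
  obtain ⟨y, hyK, hymax⟩ := hK.exists_isMaxOn hKne hVcont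
  have hyΩ : y ∈ Ω := by
    by_contra hyn
    have hyf : y ∈ frontier Ω := by
      rw [frontier, hΩopen.interior_eq]
      exact ⟨hyK, hyn⟩
    have h1 : V y ≤ ε * Q := by
      rw [hVdef]
      simp only [hW0 y hyf, zero_add]
      exact mul_le_mul_of_nonneg_left (hz₀max hyK) hε.le
    have h2 : V x₀ ≤ V y := hymax (subset_closure hx₀)
    have h3 : w x₀ ≤ V x₀ := by
      have hq := qFn_nonneg (n := n) x₀
      have hVx : V x₀ = w x₀ + ε * qFn n x₀ := by
        simp only [hVdef]
        rw [hWeq x₀ hx₀]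
      rw [hVx]
      nlinarith
    have h4 : ε * (Q + 1) < w x₀ := by
      rw [hεdef]
      rw [div_mul_eq_mul_div]
      rw [div_lt_iff₀ (by linarith)]
      nlinarith [hwpos x₀ hx₀]
    have := mul_le_mul_of_nonneg_left hQ0 hε.le
    nlinarith
  -- the function v = w + ε * qFn has a local max at y
  set v : E n → ℝ := fun x => w x + ε * qFn n x with hvdef
  have hvmax : IsLocalMax v y := by
    have hev : ∀ᶠ x in nhds y, x ∈ Ω := hΩopen.eventually_mem hyΩ
    filter_upwards [hev] with x hx
    have h1 : v x = V x := by rw [hvdef, hVdef]; simp [hWeq x hx]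
    have h2 : v y = V y := by rw [hvdef, hVdef]; simp [hWeq y hyΩ]
    rw [h1, h2]
    exact hymax (subset_closure hx)
  have hvC2 : ContDiffAt ℝ 2 v y :=
    (hwC2 y hyΩ).add (contDiffAt_const.mul (qFn_contDiff (m := 2)).contDiffAt)
  -- second derivative of v at y
  set Bw : E n →L[ℝ] (E n →L[ℝ] ℝ) := fderiv ℝ (fderiv ℝ w) y with hBwdef
  set Bv : E n →L[ℝ] (E n →L[ℝ] ℝ) := fderiv ℝ (fderiv ℝ v) y with hBvdef
  have hBv : Bv = Bw + ε • qL n := by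
    have hev : fderiv ℝ v =ᶠ[nhds y] fun x => fderiv ℝ w x + ε • fderiv ℝ (qFn n) x := by
      filter_upwards [hΩopen.eventually_mem hyΩ] with x hx
      have hdw : DifferentiableAt ℝ w x := ((hwC2 x hx).differentiableAt (by norm_num))
      have hdq : DifferentiableAt ℝ (qFn n) x := (qFn_hasFDerivAt x).differentiableAt
      rw [hvdef]
      rw [fderiv_fun_add hdw (hdq.const_mul ε), fderiv_const_mul hdq]
    rw [hBvdef, hev.fderiv_eq]
    have hdw' : DifferentiableAt ℝ (fun x => fderiv ℝ w x) y :=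
      ((hwC2 y hyΩ).fderiv_right (m := 1) (by norm_num)).differentiableAt one_ne_zero
    have hqeq : (fun x => ε • fderiv ℝ (qFn n) x) = fun x => ε • qL n x := by
      rw [qFn_fderiv]
    have hdq' : DifferentiableAt ℝ (fun x => ε • fderiv ℝ (qFn n) x) y := by
      rw [hqeq]
      exact ((ε • qL n).differentiableAt (x := y))
    rw [fderiv_fun_add hdw' hdq']
    congr 1
    rw [hqeq]
    exact (ε • qL n).fderiv
  -- negative semidefiniteness of the second derivative of v at y
  have htest : ∀ h : E n, Bv h h ≤ 0 := fun h => sndDerivTest hvC2 hvmax h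
  -- basis vectors
  set e : Fin n → E n := fun i => EuclideanSpace.single i 1 with hedef
  set P : Matrix (Fin n) (Fin n) ℝ := fun i j => Bv (e i) (e j) with hPdef
  have hquad : ∀ c : Fin n → ℝ, ∑ i, ∑ j, c i * c j * P i j ≤ 0 := by
    intro c
    have hexp : Bv (∑ i, c i • e i) (∑ j, c j • e j) = ∑ i, ∑ j, c i * c j * P i j := by
      simp only [_root_.map_sum, _root_.map_smul, ContinuousLinearMap.sum_apply,
        ContinuousLinearMap.smul_apply, smul_eq_mul, Finset.mul_sum]
      rw [Finset.sum_comm]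
      refine Finset.sum_congr rfl fun i _ => Finset.sum_congr rfl fun j _ => ?_
      simp only [hPdef]
      ring
    rw [← hexp]
    exact htest _
  -- adjugate is positive definite
  have hadj : (Hess u y).adjugate.PosDef := adjugate_posdef (hpos y hyΩ)
  -- pairing with P
  have hpair : ∑ i, ∑ j, (Hess u y).adjugate i j * P i j ≤ 0 :=
    pairing_nonpos hadj.posSemidef P hquad
  -- split P using hBv
  have hPsplit : ∀ i j, P i j = Bw (e i) (e j) + ε * (2 * (e i 0) * (e j 0)) := by
    intro i j
    rw [hPdef]
    simp only [hBv, ContinuousLinearMap.add_apply, ContinuousLinearMap.smul_apply,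
      ContinuousLinearMap.coe_smul', Pi.smul_apply]
    rw [qL_apply]
    simp [smul_eq_mul]
  -- the Bw part is Lop, which vanishes
  have hLopEq : ∑ i, ∑ j, (Hess u y).adjugate i j * Bw (e i) (e j) = 0 := by
    have := hLop y hyΩ
    rw [Lop] at this
    convert this using 2 with i
    refine Finset.sum_congr rfl fun j _ => ?_
    rw [iteratedFDeriv_two_apply]
    simp [hedef, hBwdef, hwdef]
  -- the qL part is 2 ε adjugate₀₀
  have hQpart : ∑ i, ∑ j, (Hess u y).adjugate i j * (ε * (2 * (e i 0) * (e j 0)))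
      = ε * (2 * (Hess u y).adjugate 0 0) := by
    have hterm : ∀ i j : Fin n, (Hess u y).adjugate i j * (ε * (2 * (e i 0) * (e j 0)))
        = if j = 0 then (if i = 0 then ε * (2 * (Hess u y).adjugate 0 0) else 0) else 0 := by
      intro i j
      simp only [hedef, EuclideanSpace.single_apply]
      rcases eq_or_ne i 0 with rfl | hi
      · rcases eq_or_ne j 0 with rfl | hj
        · simp only [eq_self_iff_true, if_true]
          ring
        · simp only [eq_self_iff_true, if_true, if_neg (Ne.symm hj), if_neg hj]
          ring
      · rcases eq_or_ne j 0 with rfl | hj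
        · simp only [eq_self_iff_true, if_true, if_neg (Ne.symm hi), if_neg hi]
          ring
        · simp only [if_neg (Ne.symm hi), if_neg (Ne.symm hj), if_neg hj]
          ring
    simp_rw [hterm]
    simp [Finset.sum_ite_eq', Finset.mem_univ]
  -- conclusion
  have hsplit : ∑ i, ∑ j, (Hess u y).adjugate i j * P i j
      = ε * (2 * (Hess u y).adjugate 0 0) := by
    calc ∑ i, ∑ j, (Hess u y).adjugate i j * P i j
        = (∑ i, ∑ j, (Hess u y).adjugate i j * Bw (e i) (e j))
          + ∑ i, ∑ j, (Hess u y).adjugate i j * (ε * (2 * (e i 0) * (e j 0))) := by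
          rw [← Finset.sum_add_distrib]
          refine Finset.sum_congr rfl fun i _ => ?_
          rw [← Finset.sum_add_distrib]
          refine Finset.sum_congr rfl fun j _ => ?_
          rw [hPsplit i j, mul_add]
      _ = ε * (2 * (Hess u y).adjugate 0 0) := by rw [hLopEq, hQpart, zero_add]
  have hfin : 0 < ε * (2 * (Hess u y).adjugate 0 0) :=
    mul_pos hε (by linarith [posdef_diag_pos hadj 0])
  rw [hsplit] at hpair
  exact absurd (lt_of_lt_of_le hfin hpair) (lt_irrefl _)

end
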